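/- Let R_A, R_P > 0, R_0 < 0, V < 0, and define G(ρ) = ρ(-R_0 + ((R_A+R_P)/R_P) (R_P/(ρ R_A))^{R_A/(R_A+R_P)} V) for ρ > 0. Then G attains its infimum over (0,∞) at ρ* = (R_P/R_A)(V/R_0)^{1 + R_P/R_A}, and the infimum value equals R_0 (V/R_0)^{1 + R_P/R_A}. -/

import Mathlib

lemma young_min (A B a ρs ρ : ℝ) (hA : 0 < A) (ha0 : 0 < a) (ha1 : a < 1)
    (hρs : 0 < ρs) (hρ : 0 < ρ) (hkey : B * (1 - a) = A * ρs ^ a) :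
    A * ρs - B * ρs ^ (1 - a) ≤ A * ρ - B * ρ ^ (1 - a) := by
  set K : ℝ := A / (1 - a) with hK_def
  have h1a : (0:ℝ) < 1 - a := by linarith
  have hK : 0 < K := div_pos hA h1a
  have hKA : K * (1 - a) = A := by
    rw [hK_def]; exact div_mul_cancel₀ A h1a.ne'
  have hBK : B = K * ρs ^ a := by
    rw [hK_def, div_mul_eq_mul_div, eq_div_iff h1a.ne']
    linarith [hkey]
  have amgm : ρ ^ (1 - a) * ρs ^ a ≤ (1 - a) * ρ + a * ρs :=
    Real.geom_mean_le_arith_mean2_weighted (by linarith) ha0.le hρ.le hρs.le (by ring)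
  have hmulρs : ρs ^ (1 - a) * ρs ^ a = ρs := by
    rw [← Real.rpow_add hρs]; norm_num
  have h2 : B * ρs ^ (1 - a) = K * ρs := by
    calc B * ρs ^ (1 - a) = K * (ρs ^ (1 - a) * ρs ^ a) := by rw [hBK]; ring
    _ = K * ρs := by rw [hmulρs]
  have h3 : B * ρ ^ (1 - a) ≤ A * ρ + K * (a * ρs) := by
    have : B * ρ ^ (1 - a) = K * (ρ ^ (1 - a) * ρs ^ a) := by rw [hBK]; ring
    rw [this]
    calc K * (ρ ^ (1 - a) * ρs ^ a) ≤ K * ((1 - a) * ρ + a * ρs) :=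
          mul_le_mul_of_nonneg_left amgm hK.le
      _ = A * ρ + K * (a * ρs) := by rw [← hKA]; ring
  have h4 : A * ρs = K * ρs - K * (a * ρs) := by rw [← hKA]; ring
  linarith

theorem stmt15 (RA RP R0 V : ℝ) (hA : 0 < RA) (hP : 0 < RP)
    (h0 : R0 < 0) (hV : V < 0) :
    let G : ℝ → ℝ := fun ρ =>
      ρ * (-R0 + (RA + RP) / RP * (RP / (ρ * RA)) ^ (RA / (RA + RP)) * V)
    let ρs : ℝ := RP / RA * (V / R0) ^ (1 + RP / RA)
    0 < ρs ∧ (∀ ρ : ℝ, 0 < ρ → G ρs ≤ G ρ) ∧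
      G ρs = R0 * (V / R0) ^ (1 + RP / RA) := by
  intro G ρs
  have hG : ∀ ρ : ℝ, G ρ =
      ρ * (-R0 + (RA + RP) / RP * (RP / (ρ * RA)) ^ (RA / (RA + RP)) * V) := fun _ => rfl
  have hρs_def : ρs = RP / RA * (V / R0) ^ (1 + RP / RA) := rfl
  have hS : 0 < RA + RP := by linarith
  set a : ℝ := RA / (RA + RP) with ha_def
  set t : ℝ := V / R0 with ht_def
  set s : ℝ := 1 + RP / RA with hs_def
  have ha0 : 0 < a := div_pos hA hS
  have ha1 : a < 1 := by rw [ha_def, div_lt_one hS]; linarith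
  have ht : 0 < t := div_pos_of_neg_of_neg hV h0
  have hsa : s * a = 1 := by
    rw [hs_def, ha_def]; field_simp
  have hts : 0 < t ^ s := Real.rpow_pos_of_pos ht s
  have hρs : 0 < ρs := by rw [hρs_def]; exact mul_pos (div_pos hP hA) hts
  -- key2 : ρs ^ a
  have key2 : ρs ^ a = (RP / RA) ^ a * t := by
    rw [hρs_def, Real.mul_rpow (div_pos hP hA).le hts.le, ← Real.rpow_mul ht.le, hsa,
      Real.rpow_one]
  -- key1 : exponent at ρs
  have key1 : (RP / (ρs * RA)) ^ a = R0 / V := by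
    have hmul : RP / (ρs * RA) = (t ^ s)⁻¹ := by
      rw [hρs_def]; field_simp
    rw [hmul, Real.inv_rpow hts.le, ← Real.rpow_mul ht.le, hsa, Real.rpow_one, ht_def, inv_div]
  -- value at ρs
  have hGval : G ρs = R0 * t ^ s := by
    rw [hG, key1, hρs_def]
    field_simp [h0.ne, hV.ne, hP.ne', hA.ne']
    ring
  refine ⟨hρs, ?_, hGval⟩
  -- minimality
  set A : ℝ := -R0 with hA_def
  set B : ℝ := (RA + RP) / RP * (RP / RA) ^ a * (-V) with hB_def
  have hApos : 0 < A := by rw [hA_def]; linarith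
  have hform : ∀ ρ : ℝ, 0 < ρ → G ρ = A * ρ - B * ρ ^ (1 - a) := by
    intro ρ hρ
    have step1 : (RP / (ρ * RA)) ^ a = (RP / RA) ^ a * ρ ^ (-a) := by
      have h : RP / (ρ * RA) = RP / RA * ρ⁻¹ := by
        rw [mul_comm ρ RA, ← div_div, div_eq_mul_inv]
      rw [h, Real.mul_rpow (div_pos hP hA).le (inv_nonneg.2 hρ.le), Real.inv_rpow hρ.le,
        ← Real.rpow_neg hρ.le]
    have hpow : ρ ^ (1 - a) = ρ * ρ ^ (-a) := by
      rw [show (1:ℝ) - a = 1 + -a from by ring, Real.rpow_add hρ, Real.rpow_one]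
    rw [hG, step1, hpow, hA_def, hB_def]
    ring
  have h1a : 1 - a = RP / (RA + RP) := by
    rw [ha_def]; field_simp; ring
  have hkey : B * (1 - a) = A * ρs ^ a := by
    rw [key2, h1a, hB_def, hA_def, ht_def]
    field_simp [h0.ne, hV.ne, hP.ne', hA.ne', hS.ne']
  intro ρ hρ
  rw [hform ρs hρs, hform ρ hρ]
  exact young_min A B a ρs ρ hApos ha0 ha1 hρs hρ hkey
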